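/- Let u be an infinite word over a finite alphabet A whose language L(u) is closed under reversal, and let w ∈ L(u) be a palindrome (w = w̃). If the graph Θ(w) is connected, then m(w) ≥ #E⁼(w) − 1; moreover, m(w) > #E⁼(w) − 1 if and only if Θ(w) contains a cycle, and m(w) = #E⁼(w) − 1 if and only if Θ(w) is a tree. -/

import Mathlib

namespace ZDC

variable {A : Type*}

/-- The finite word `u_i u_{i+1} ⋯ u_{i+n-1}` occurring at position `i` in `u`. -/
def factorAt (u : ℕ → A) (i n : ℕ) : List A := (List.range n).map (fun j => u (i + j))

/-- `w` occurs at index `i` in the infinite word `u`. -/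
def OccursAt (u : ℕ → A) (w : List A) (i : ℕ) : Prop := w = factorAt u i w.length

/-- The language of the infinite word `u`: the set of its factors. -/
def Lang (u : ℕ → A) : Set (List A) := {w | ∃ i, OccursAt u w i}

/-- The language of `u` is closed under reversal. -/
def ClosedUnderReversal (u : ℕ → A) : Prop := ∀ w ∈ Lang u, w.reverse ∈ Lang u

/-- Number of distinct palindromic factors of a finite word (the empty word counts). -/
noncomputable def palCount (w : List A) : ℕ := {v : List A | v <:+: w ∧ v.reverse = v}.ncard

/-- Palindromic defect of a finite word: `|w| + 1 - p(w)`. -/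
noncomputable def wordDefect (w : List A) : ℕ := w.length + 1 - palCount w

/-- Palindromic defect of an infinite word: sup of defects of its factors, in `ℕ∞`. -/
noncomputable def Defect (u : ℕ → A) : ℕ∞ := ⨆ w ∈ Lang u, (wordDefect w : ℕ∞)

/-- `u` contains infinitely many palindromic factors. -/
def Palindromic (u : ℕ → A) : Prop := ∀ N, ∃ w ∈ Lang u, N ≤ w.length ∧ w.reverse = w

/-- `u` is (purely) periodic: `u = zzz⋯` for a nonempty `z`. -/
def Periodic (u : ℕ → A) : Prop := ∃ p, 0 < p ∧ ∀ n, u (n + p) = u n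

/-- `u` is eventually periodic: `u = v zzz⋯`. -/
def EventuallyPeriodic (u : ℕ → A) : Prop := ∃ p, 0 < p ∧ ∃ N, ∀ n ≥ N, u (n + p) = u n

/-- `r` is a complete return word to `w` in `u`: it stretches from one occurrence of `w`
to the next one (inclusively). -/
def IsCompleteReturn (u : ℕ → A) (w r : List A) : Prop :=
  ∃ i j, i < j ∧ OccursAt u w i ∧ OccursAt u w j ∧
    (∀ k, i < k → k < j → ¬ OccursAt u w k) ∧
    r = factorAt u i (j + w.length - i)

/-- `c` is a complete mirror return to `w` in `u`. -/
def IsCompleteMirrorReturn (u : ℕ → A) (w c : List A) : Prop :=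
  c ∈ Lang u ∧
  ¬ w <:+: (c.drop 1).dropLast ∧ ¬ w.reverse <:+: (c.drop 1).dropLast ∧
  ((w <+: c ∧ w.reverse <:+ c) ∨ (w.reverse <+: c ∧ w <:+ c))

/-- Occurrences of `w` and its reversal alternate in `u`. -/
def Alternate (u : ℕ → A) (w : List A) : Prop :=
  (∀ i j, i < j → OccursAt u w i → OccursAt u w j →
    (∀ k, i < k → k < j → ¬ OccursAt u w k) →
    ∃ k, i ≤ k ∧ k ≤ j ∧ OccursAt u w.reverse k) ∧
  (∀ i j, i < j → OccursAt u w.reverse i → OccursAt u w.reverse j →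
    (∀ k, i < k → k < j → ¬ OccursAt u w.reverse k) →
    ∃ k, i ≤ k ∧ k ≤ j ∧ OccursAt u w k)

/-- Left extensions `E⁻(w)`. -/
def Eminus (u : ℕ → A) (w : List A) : Set A := {a | a :: w ∈ Lang u}

/-- Right extensions `E⁺(w)`. -/
def Eplus (u : ℕ → A) (w : List A) : Set A := {b | w ++ [b] ∈ Lang u}

/-- Bilateral extensions `E(w)`. -/
def Eboth (u : ℕ → A) (w : List A) : Set (A × A) := {p | p.1 :: (w ++ [p.2]) ∈ Lang u}

/-- Symmetric bilateral extensions `E⁼(w)`. -/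
def Esym (u : ℕ → A) (w : List A) : Set A := {a | a :: (w ++ [a]) ∈ Lang u}

/-- Bilateral multiplicity `m(w) = #E(w) − #E⁺(w) − #E⁻(w) + 1`. -/
noncomputable def mult (u : ℕ → A) (w : List A) : ℤ :=
  ((Eboth u w).ncard : ℤ) - (Eplus u w).ncard - (Eminus u w).ncard + 1

/-- `w` is a bispecial factor of `u`. -/
def Bispecial (u : ℕ → A) (w : List A) : Prop :=
  2 ≤ (Eminus u w).ncard ∧ 2 ≤ (Eplus u w).ncard

/-- The bipartite extension graph `Γ(w)` with vertex set `E⁻(w) ⊔ E⁺(w)`. -/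
def GammaGraph (u : ℕ → A) (w : List A) : SimpleGraph (↥(Eminus u w) ⊕ ↥(Eplus u w)) :=
  SimpleGraph.fromRel (fun x y =>
    ∃ (a : ↥(Eminus u w)) (b : ↥(Eplus u w)),
      x = Sum.inl a ∧ y = Sum.inr b ∧ ((a : A), (b : A)) ∈ Eboth u w)

/-- The graph `Θ(w)` on the vertex set `E⁻(w)` for a palindrome `w`. -/
def ThetaGraph (u : ℕ → A) (w : List A) : SimpleGraph (↥(Eminus u w)) :=
  SimpleGraph.fromRel (fun a b => ((a : A), (b : A)) ∈ Eboth u w)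

/-- Factor complexity `C(n)`. -/
noncomputable def complexity (u : ℕ → A) (n : ℕ) : ℕ :=
  {w ∈ Lang u | w.length = n}.ncard

/-- Palindromic complexity `P(n)`. -/
noncomputable def palComplexity (u : ℕ → A) (n : ℕ) : ℕ :=
  {w ∈ Lang u | w.length = n ∧ w.reverse = w}.ncard

/-- Extension of a morphism (given by its letter images) to finite words. -/
def Apply (φ : A → List A) (x : List A) : List A := x.flatMap φ

/-- A morphism is primitive if some power maps each letter to a word containing all letters. -/
def Primitive (φ : A → List A) : Prop :=
  ∃ k, 1 ≤ k ∧ ∀ a b : A, b ∈ (Apply φ)^[k] [a]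

/-- `u` is a fixed point of `φ`: the image of every prefix of `u` is again a prefix of `u`. -/
def IsFixedPoint (φ : A → List A) (u : ℕ → A) : Prop :=
  ∀ n, Apply φ (factorAt u 0 n) = factorAt u 0 (Apply φ (factorAt u 0 n)).length

/-- `ψ ▷ φ`: `ψ` is a left conjugate of `φ` with conjugate word `w`,
i.e. `φ(a)w = wψ(a)` for every letter `a`. -/
def LeftConj (ψ φ : A → List A) (w : List A) : Prop :=
  ∀ a, φ a ++ w = w ++ ψ a

/-- A morphism is cyclic if all images of letters are powers of a common word. -/
def Cyclic (φ : A → List A) : Prop :=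
  ∃ w : List A, ∀ a, ∃ k : ℕ, φ a = (List.replicate k w).flatten

/-- First letter (as an `Option`) of the image of a letter. -/
def Fst (φ : A → List A) : A → Option A := fun a => (φ a).head?

/-- Last letter (as an `Option`) of the image of a letter. -/
def Lst (φ : A → List A) : A → Option A := fun a => (φ a).getLast?

/-- `φL` is the leftmost conjugate of `φ`: a left conjugate whose first-letter map
is not constant. -/
def IsLeftmostConj (φL φ : A → List A) : Prop :=
  (∃ w, LeftConj φL φ w) ∧ ¬ (∀ a b, Fst φL a = Fst φL b)

/-- `φR` is the rightmost conjugate of `φ`: a right conjugate whose last-letter map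
is not constant. -/
def IsRightmostConj (φR φ : A → List A) : Prop :=
  (∃ w, LeftConj φ φR w) ∧ ¬ (∀ a b, Lst φR a = Lst φR b)

/-- A marked morphism: acyclic, and the first-letter map of its leftmost conjugate and
the last-letter map of its rightmost conjugate are injective. -/
def Marked (φ : A → List A) : Prop :=
  ¬ Cyclic φ ∧
  (∃ φL, IsLeftmostConj φL φ ∧ Function.Injective (Fst φL)) ∧
  (∃ φR, IsRightmostConj φR φ ∧ Function.Injective (Lst φR))

end ZDC

section AuxStmt9

open ZDC SimpleGraph

private lemma aux_conn_card {V : Type*} [Fintype V] :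
    ∀ (n : ℕ) (G : SimpleGraph V), G.Connected → G.edgeSet.ncard = n →
    Fintype.card V ≤ n + 1 ∧ (¬ G.IsAcyclic → Fintype.card V ≤ n) := by
  classical
  intro n
  induction n using Nat.strong_induction_on with
  | _ n ih =>
    intro G hG hn
    by_cases hac : G.IsAcyclic
    · have ht : G.IsTree := ⟨hG, hac⟩
      have hcard := ht.card_edgeFinset
      have h2 : G.edgeSet.ncard = G.edgeFinset.card := by
        rw [← Nat.card_coe_set_eq, Nat.card_eq_fintype_card, SimpleGraph.edgeFinset_card]
      constructor
      · omega
      · intro h; exact absurd hac h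
    · have hex : ∃ (v : V) (c : G.Walk v v), c.IsCycle := by
        by_contra h; push_neg at h; exact hac fun v c hcyc => h v c hcyc
      obtain ⟨v, c, hc⟩ := hex
      cases c with
      | nil => exact absurd hc (by simp [Walk.isCycle_def])
      | @cons _ b _ hadj q =>
        have hmemedge : s(v, b) ∈ (Walk.cons hadj q).edges := by simp
        have hreach : (G \ fromEdgeSet {s(v, b)}).Reachable v b :=
          (adj_and_reachable_delete_edges_iff_exists_cycle.mpr ⟨v, _, hc, hmemedge⟩).2
        set G' := G \ fromEdgeSet {s(v, b)} with hG'
        have hstep : ∀ {a c : V}, G.Adj a c → G'.Reachable a c := by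
          intro a c hac2
          by_cases he : s(a, c) = s(v, b)
          · rw [Sym2.eq_iff] at he
            rcases he with ⟨rfl, rfl⟩ | ⟨rfl, rfl⟩
            · exact hreach
            · exact hreach.symm
          · exact SimpleGraph.Adj.reachable
              (by simp [hG', sdiff_adj, fromEdgeSet_adj, he, hac2])
        have hconn' : G'.Connected := by
          rw [connected_iff]
          refine ⟨fun a c => ?_, hG.nonempty⟩
          obtain ⟨p⟩ := hG.preconnected a c
          induction p with
          | nil => exact Reachable.refl _
          | cons h p ih2 => exact (hstep h).trans ih2
        have hES : G'.edgeSet = G.edgeSet \ {s(v, b)} := by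
          rw [hG', edgeSet_sdiff, edgeSet_fromEdgeSet, edgeSet_sdiff_sdiff_isDiag]
        have hmem : s(v, b) ∈ G.edgeSet := hadj
        have hfin : G.edgeSet.Finite := Set.toFinite _
        have hpos : 0 < G.edgeSet.ncard := by
          rw [Set.ncard_pos hfin]; exact ⟨_, hmem⟩
        have hn' : G'.edgeSet.ncard = n - 1 := by
          rw [hES, Set.ncard_diff_singleton_of_mem hmem, hn]
        have := ih (n - 1) (by omega) G' hconn' hn'
        exact ⟨by omega, fun _ => by omega⟩

private lemma prefix_mem_lang {A : Type*} {u : ℕ → A} {v x : List A}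
    (hvx : v <+: x) (hx : x ∈ Lang u) : v ∈ Lang u := by
  obtain ⟨i, hocc⟩ := hx
  obtain ⟨t, rfl⟩ := hvx
  refine ⟨i, ?_⟩
  show v = factorAt u i v.length
  have h := congrArg (List.take v.length) hocc
  rw [List.take_left] at h
  rw [h]
  unfold factorAt
  rw [← List.map_take, List.take_range, Nat.min_eq_left (by simp)]
  simp

private lemma both_symm {A : Type*} {u : ℕ → A} {w : List A}
    (hclosed : ClosedUnderReversal u) (hpal : w.reverse = w)
    {a b : A} (h : a :: (w ++ [b]) ∈ Lang u) : b :: (w ++ [a]) ∈ Lang u := by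
  have h2 := hclosed _ h
  have hrev : (a :: (w ++ [b])).reverse = b :: (w ++ [a]) := by simp [hpal]
  rwa [hrev] at h2

private lemma mem_eminus_of_both {A : Type*} {u : ℕ → A} {w : List A}
    {a b : A} (h : a :: (w ++ [b]) ∈ Lang u) : a ∈ Eminus u w :=
  prefix_mem_lang ⟨[b], by simp⟩ h

private lemma eplus_eq_eminus {A : Type*} {u : ℕ → A} {w : List A}
    (hclosed : ClosedUnderReversal u) (hpal : w.reverse = w) :
    Eplus u w = Eminus u w := by
  ext a
  constructor
  · intro h
    have h2 := hclosed _ (show w ++ [a] ∈ Lang u from h)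
    have hrev : (w ++ [a]).reverse = a :: w := by simp [hpal]
    rwa [hrev] at h2
  · intro h
    have h2 := hclosed _ (show a :: w ∈ Lang u from h)
    have hrev : (a :: w).reverse = w ++ [a] := by simp [hpal]
    rwa [hrev] at h2

end AuxStmt9

open ZDC in
/-- Suppose `L(u)` is closed under reversal and `w` is a palindromic
factor. If `Θ(w)` is connected, then `m(w) ≥ #E⁼(w) − 1`; moreover `m(w) > #E⁼(w) − 1`
iff `Θ(w)` contains a cycle and `m(w) = #E⁼(w) − 1` iff `Θ(w)` is a tree. -/
theorem stmt_9 {A : Type*} [Fintype A] (u : ℕ → A) (w : List A)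
    (hclosed : ClosedUnderReversal u) (hw : w ∈ Lang u) (hpal : w.reverse = w)
    (hconn : (ThetaGraph u w).Connected) :
    ((Esym u w).ncard : ℤ) - 1 ≤ mult u w ∧
    (((Esym u w).ncard : ℤ) - 1 < mult u w ↔ ¬ (ThetaGraph u w).IsAcyclic) ∧
    (mult u w = ((Esym u w).ncard : ℤ) - 1 ↔ (ThetaGraph u w).IsTree) := by
  classical
  haveI : Fintype ↥(Eminus u w) := Fintype.ofFinite _
  set G := ThetaGraph u w with hGdef
  haveI : DecidableRel G.Adj := Classical.decRel _
  have hplus : Eplus u w = Eminus u w := eplus_eq_eminus hclosed hpal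
  have hadj : ∀ a b : ↥(Eminus u w), G.Adj a b ↔ a ≠ b ∧ ((a : A), (b : A)) ∈ Eboth u w := by
    intro a b
    rw [hGdef, ThetaGraph, SimpleGraph.fromRel_adj]
    constructor
    · rintro ⟨hne, h | h⟩
      · exact ⟨hne, h⟩
      · exact ⟨hne, both_symm hclosed hpal h⟩
    · rintro ⟨hne, h⟩; exact ⟨hne, Or.inl h⟩
  set O : Set (A × A) := {p | p ∈ Eboth u w ∧ p.1 ≠ p.2} with hOdef
  set D : Set (A × A) := {p | p ∈ Eboth u w ∧ p.1 = p.2} with hDdef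
  have hOcard : O.ncard = 2 * G.edgeFinset.card := by
    have F : O ≃ G.Dart :=
      { toFun := fun p => ⟨(⟨p.1.1, mem_eminus_of_both p.2.1⟩,
            ⟨p.1.2, mem_eminus_of_both (both_symm hclosed hpal p.2.1)⟩),
          (hadj _ _).mpr ⟨fun hh => p.2.2 (congrArg Subtype.val hh), p.2.1⟩⟩
        invFun := fun d => ⟨((d.fst : A), (d.snd : A)), by
          obtain ⟨hne, hb⟩ := (hadj _ _).mp d.adj
          exact ⟨hb, fun hx => hne (Subtype.ext hx)⟩⟩
        left_inv := fun p => rfl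
        right_inv := fun d => rfl }
    calc O.ncard = Nat.card O := (Nat.card_coe_set_eq _).symm
      _ = Nat.card G.Dart := Nat.card_congr F
      _ = 2 * G.edgeFinset.card := by
          rw [Nat.card_eq_fintype_card, SimpleGraph.dart_card_eq_twice_card_edges]
  have hDcard : D.ncard = (Esym u w).ncard := by
    have hD : D = (fun a => (a, a)) '' (Esym u w) := by
      ext p
      constructor
      · rintro ⟨hp, heq⟩
        obtain ⟨a, b⟩ := p
        simp only at heq
        subst heq
        exact ⟨a, hp, rfl⟩
      · rintro ⟨a, ha, rfl⟩
        exact ⟨ha, rfl⟩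
    rw [hD, Set.ncard_image_of_injective _ (fun a b h => (Prod.ext_iff.mp h).1)]
  have hdisj : Disjoint D O := by
    rw [Set.disjoint_left]
    rintro p ⟨_, h⟩ ⟨_, h'⟩
    exact h' h
  have hsplit : Eboth u w = D ∪ O := by
    ext p
    constructor
    · intro hp
      by_cases h : p.1 = p.2
      · exact Or.inl ⟨hp, h⟩
      · exact Or.inr ⟨hp, h⟩
    · rintro (⟨h, _⟩ | ⟨h, _⟩) <;> exact h
  have hcard : (Eboth u w).ncard = (Esym u w).ncard + 2 * G.edgeFinset.card := by
    rw [hsplit, Set.ncard_union_eq hdisj (Set.toFinite D) (Set.toFinite O), hDcard, hOcard]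
  have hv : (Eminus u w).ncard = Fintype.card ↥(Eminus u w) := by
    rw [← Nat.card_coe_set_eq, Nat.card_eq_fintype_card]
  have he : G.edgeSet.ncard = G.edgeFinset.card := by
    rw [← Nat.card_coe_set_eq, Nat.card_eq_fintype_card, SimpleGraph.edgeFinset_card]
  obtain ⟨hA, hB⟩ := aux_conn_card G.edgeSet.ncard G hconn rfl
  rw [he] at hA hB
  have hT : G.IsAcyclic → G.edgeFinset.card + 1 = Fintype.card ↥(Eminus u w) :=
    fun hac => SimpleGraph.IsTree.card_edgeFinset ⟨hconn, hac⟩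
  have hmult : mult u w = ((Esym u w).ncard : ℤ) + 2 * (G.edgeFinset.card : ℤ)
      - 2 * (Fintype.card ↥(Eminus u w) : ℤ) + 1 := by
    unfold mult
    rw [hplus, hcard, hv]
    push_cast
    ring
  refine ⟨?_, ⟨?_, ?_⟩, ?_, ?_⟩
  · rw [hmult]; omega
  · intro hlt hac
    have := hT hac
    rw [hmult] at hlt
    omega
  · intro hnac
    have := hB hnac
    rw [hmult]
    omega
  · intro heq
    refine ⟨hconn, ?_⟩
    by_contra hnac
    have := hB hnac
    rw [hmult] at heq
    omega
  · intro ht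
    have := hT ht.2
    rw [hmult]
    omega
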